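/- For any graph F, any n ≥ |V(F)|, and any q ≥ 1: if a q-graph H ⊆ Q(n,2) contains no (q+1)-copy of F, then |H| ≤ (q² − (q − ⌈(q+1)/2⌉ + 1)²)·C(n,2) + (q − ⌈(q+1)/2⌉ + 1)²·ex(n,F), where ex(n,F) is the ordinary Turán number of F. -/

import Mathlib

open Finset

/-- The support of a vector: indices of nonzero entries. -/
def qsupport {n : ℕ} (x : Fin n → ℕ) : Finset (Fin n) :=
  Finset.univ.filter (fun i => x i ≠ 0)

/-- `Qset q n` : all q-edges, i.e. vectors in `{0,…,q}^n` with exactly two nonzero entries. -/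
def Qset (q n : ℕ) : Finset (Fin n → ℕ) :=
  ((Finset.univ : Finset (Fin n → Fin (q+1))).image (fun f i => (f i : ℕ))).filter
    (fun x => (qsupport x).card = 2)

/-- The q-edge with support `{i,j}`, value `a` at `i` and `b` at `j`. -/
def qedge {n : ℕ} (i j : Fin n) (a b : ℕ) : Fin n → ℕ :=
  fun k => if k = i then a else if k = j then b else 0

/-- `H` is an `s`-copy of the graph `F`. -/
def IsSCopy {α : Type} [Fintype α] (s : ℕ) (F : SimpleGraph α) {n : ℕ}
    (H : Finset (Fin n → ℕ)) : Prop :=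
  ∃ ι : α → Fin n, Function.Injective ι ∧
    (∀ u v : α, F.Adj u v ↔ ∃ x ∈ H, qsupport x = {ι u, ι v}) ∧
    H.card = Nat.card F.edgeSet ∧
    ∀ x ∈ H, ∀ y ∈ H, x ≠ y → ∀ i, x i ≠ 0 → y i ≠ 0 → s ≤ x i + y i

/-- `H` contains an `s`-copy of `F`. -/
def ContainsSCopy {α : Type} [Fintype α] (s : ℕ) (F : SimpleGraph α) {n : ℕ}
    (H : Finset (Fin n → ℕ)) : Prop :=
  ∃ H' ⊆ H, IsSCopy s F H'

/-- The ordinary Turán number `ex(n,F)`. -/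
noncomputable def exNum {α : Type} [Fintype α] (n : ℕ) (F : SimpleGraph α) : ℕ :=
  sSup {m | ∃ G : SimpleGraph (Fin n),
    (¬ ∃ φ : F →g G, Function.Injective φ) ∧ m = Nat.card G.edgeSet}

/-- The Turán number `ex(n,F,q,s)`. -/
noncomputable def exQ {α : Type} [Fintype α] (n : ℕ) (F : SimpleGraph α) (q s : ℕ) : ℕ :=
  sSup {m | ∃ H ⊆ Qset q n, ¬ ContainsSCopy s F H ∧ m = H.card}

lemma pair_eq_cases {β : Type*} [DecidableEq β] {i j a b : β}
    (h : ({i,j} : Finset β) = {a,b}) : (i = a ∧ j = b) ∨ (i = b ∧ j = a) := by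
  have ha : a ∈ ({i,j} : Finset β) := h ▸ by simp
  have hb : b ∈ ({i,j} : Finset β) := h ▸ by simp
  have hi : i ∈ ({a,b} : Finset β) := h ▸ by simp
  have hj : j ∈ ({a,b} : Finset β) := h ▸ by simp
  simp only [mem_insert, mem_singleton] at ha hb hi hj
  tauto

lemma mem_Qset_iff {q n : ℕ} {x : Fin n → ℕ} :
    x ∈ Qset q n ↔ (∀ i, x i ≤ q) ∧ (qsupport x).card = 2 := by
  constructor
  · rintro hx
    simp only [Qset, Finset.mem_filter, Finset.mem_image] at hx
    obtain ⟨⟨f, _, rfl⟩, h2⟩ := hx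
    exact ⟨fun i => Nat.lt_succ_iff.mp (f i).isLt, h2⟩
  · rintro ⟨h1, h2⟩
    simp only [Qset, Finset.mem_filter, Finset.mem_image]
    refine ⟨⟨fun i => ⟨x i, Nat.lt_succ_of_le (h1 i)⟩, Finset.mem_univ _, rfl⟩, h2⟩

lemma mem_qsupport {n : ℕ} {x : Fin n → ℕ} {i : Fin n} :
    i ∈ qsupport x ↔ x i ≠ 0 := by simp [qsupport]

section Fiber
variable {n : ℕ}

lemma fiber_card_le {i j : Fin n} (hij : i ≠ j) (T : Finset (Fin n → ℕ))
    (hsup : ∀ x ∈ T, qsupport x = {i, j}) (P : Finset (ℕ × ℕ))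
    (hP : ∀ x ∈ T, (x i, x j) ∈ P) : T.card ≤ P.card := by
  apply Finset.card_le_card_of_injOn (fun x => (x i, x j)) (fun x hx => hP x hx)
  intro x hx y hy hxy
  funext k
  by_cases hk : k = i
  · subst hk; exact congrArg Prod.fst hxy
  by_cases hk' : k = j
  · subst hk'; exact congrArg Prod.snd hxy
  · have hx0 : x k = 0 := by
      by_contra h
      have : k ∈ qsupport x := mem_qsupport.mpr h
      rw [hsup x hx] at this
      simp only [mem_insert, mem_singleton] at this
      tauto
    have hy0 : y k = 0 := by
      by_contra h
      have : k ∈ qsupport y := mem_qsupport.mpr h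
      rw [hsup y hy] at this
      simp only [mem_insert, mem_singleton] at this
      tauto
    rw [hx0, hy0]

end Fiber

/-- The trivial upper bound: if `H ⊆ Q(n,2)` has no `(q+1)`-copy of `F`, then
`|H| ≤ (q² − (q − ⌈(q+1)/2⌉ + 1)²)·C(n,2) + (q − ⌈(q+1)/2⌉ + 1)²·ex(n,F)`. -/
theorem upper_bound_via_L {α : Type} [Fintype α] (F : SimpleGraph α) (n q : ℕ)
    (hq : 1 ≤ q) (hn : Fintype.card α ≤ n)
    (H : Finset (Fin n → ℕ)) (hH : H ⊆ Qset q n)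
    (hfree : ¬ ContainsSCopy (q + 1) F H) :
    H.card ≤ (q ^ 2 - (q - (q + 2) / 2 + 1) ^ 2) * n.choose 2
      + (q - (q + 2) / 2 + 1) ^ 2 * exNum n F := by
  classical
  set c := (q + 2) / 2 with hc
  set t := q - c + 1 with ht
  have hc1 : 1 ≤ c := by omega
  have hcq : c ≤ q := by omega
  have htq : q + 1 - c = t := by omega
  set HL := H.filter (fun x => ∀ i, x i ≠ 0 → c ≤ x i) with hHLdef
  set HB := H \ HL with hHBdef
  have hHLH : HL ⊆ H := Finset.filter_subset _ _
  have hsplit : H.card = HB.card + HL.card := by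
    rw [hHBdef]
    exact (Finset.card_sdiff_add_card_eq_card hHLH).symm
  -- supports are 2-element sets
  have hsupp2 : ∀ x ∈ H, (qsupport x).card = 2 := fun x hx => (mem_Qset_iff.mp (hH hx)).2
  have hle : ∀ x ∈ H, ∀ i, x i ≤ q := fun x hx => (mem_Qset_iff.mp (hH hx)).1
  have himg_le : ∀ T : Finset (Fin n → ℕ), T ⊆ H → (T.image qsupport).card ≤ n.choose 2 := by
    intro T hT
    have : T.image qsupport ⊆ Finset.powersetCard 2 Finset.univ := by
      intro s hs
      obtain ⟨x, hx, rfl⟩ := Finset.mem_image.mp hs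
      exact Finset.mem_powersetCard.mpr ⟨Finset.subset_univ _, hsupp2 x (hT hx)⟩
    calc (T.image qsupport).card ≤ (Finset.powersetCard 2 (Finset.univ : Finset (Fin n))).card :=
          Finset.card_le_card this
      _ = n.choose 2 := by rw [Finset.card_powersetCard, Finset.card_univ, Fintype.card_fin]
  -- Part 1 : HB
  have hBcard : HB.card ≤ (q ^ 2 - t ^ 2) * n.choose 2 := by
    set PB := (Finset.Icc 1 q ×ˢ Finset.Icc 1 q) \ (Finset.Icc c q ×ˢ Finset.Icc c q) with hPB
    have hPBcard : PB.card = q ^ 2 - t ^ 2 := by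
      rw [hPB, Finset.card_sdiff_of_subset (by
        apply Finset.product_subset_product <;> exact Finset.Icc_subset_Icc_left hc1)]
      rw [Finset.card_product, Finset.card_product, Nat.card_Icc, Nat.card_Icc]
      rw [htq]
      have : q + 1 - 1 = q := by omega
      rw [this, pow_two, pow_two]
    have step : HB.card ≤ (q ^ 2 - t ^ 2) * (HB.image qsupport).card := by
      apply Finset.card_le_mul_card_image
      intro s hs
      obtain ⟨x0, hx0, rfl⟩ := Finset.mem_image.mp hs
      have hx0H : x0 ∈ H := (Finset.sdiff_subset) hx0
      obtain ⟨i, j, hij, hijs⟩ := Finset.card_eq_two.mp (hsupp2 x0 hx0H)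
      rw [← hPBcard]
      apply fiber_card_le hij _ (fun x hx => by
        rw [hijs] at hx; exact (Finset.mem_filter.mp hx).2) PB
      intro x hx
      rw [hijs] at hx
      obtain ⟨hxB, hxs⟩ := Finset.mem_filter.mp hx
      obtain ⟨hxH, hxnL⟩ := Finset.mem_sdiff.mp hxB
      have hxi : x i ≠ 0 := mem_qsupport.mp (hxs ▸ (by simp : i ∈ ({i,j} : Finset (Fin n))))
      have hxj : x j ≠ 0 := mem_qsupport.mp (hxs ▸ (by simp : j ∈ ({i,j} : Finset (Fin n))))
      have hnL : ¬ (c ≤ x i ∧ c ≤ x j) := by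
        intro ⟨h1, h2⟩
        apply hxnL
        rw [hHLdef, Finset.mem_filter]
        refine ⟨hxH, fun k hk => ?_⟩
        have : k ∈ qsupport x := mem_qsupport.mpr hk
        rw [hxs] at this
        simp only [mem_insert, mem_singleton] at this
        rcases this with rfl | rfl <;> assumption
      rw [hPB]
      simp only [Finset.mem_sdiff, Finset.mem_product, Finset.mem_Icc]
      constructor
      · exact ⟨⟨Nat.one_le_iff_ne_zero.mpr hxi, hle x hxH i⟩,
          ⟨Nat.one_le_iff_ne_zero.mpr hxj, hle x hxH j⟩⟩
      · intro ⟨⟨h1, _⟩, ⟨h2, _⟩⟩; exact hnL ⟨h1, h2⟩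
    calc HB.card ≤ (q ^ 2 - t ^ 2) * (HB.image qsupport).card := step
      _ ≤ (q ^ 2 - t ^ 2) * n.choose 2 :=
          Nat.mul_le_mul_left _ (himg_le HB Finset.sdiff_subset)
  -- Part 2 : HL
  set P := HL.image qsupport with hPdef
  have hLcard : HL.card ≤ t ^ 2 * P.card := by
    apply Finset.card_le_mul_card_image
    intro s hs
    obtain ⟨x0, hx0, rfl⟩ := Finset.mem_image.mp hs
    obtain ⟨i, j, hij, hijs⟩ := Finset.card_eq_two.mp (hsupp2 x0 (hHLH hx0))
    have : t ^ 2 = (Finset.Icc c q ×ˢ Finset.Icc c q).card := by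
      rw [Finset.card_product, Nat.card_Icc, htq, pow_two]
    rw [this]
    apply fiber_card_le hij _ (fun x hx => by
      rw [hijs] at hx; exact (Finset.mem_filter.mp hx).2)
    intro x hx
    rw [hijs] at hx
    obtain ⟨hxL, hxs⟩ := Finset.mem_filter.mp hx
    obtain ⟨hxH, hxLcond⟩ := Finset.mem_filter.mp hxL
    have hxi : x i ≠ 0 := mem_qsupport.mp (hxs ▸ (by simp : i ∈ ({i,j} : Finset (Fin n))))
    have hxj : x j ≠ 0 := mem_qsupport.mp (hxs ▸ (by simp : j ∈ ({i,j} : Finset (Fin n))))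
    simp only [Finset.mem_product, Finset.mem_Icc]
    exact ⟨⟨hxLcond i hxi, hle x hxH i⟩, ⟨hxLcond j hxj, hle x hxH j⟩⟩
  -- the support graph
  set G : SimpleGraph (Fin n) := {
    Adj := fun i j => i ≠ j ∧ ({i, j} : Finset (Fin n)) ∈ P
    symm := by
      constructor
      rintro i j ⟨h1, h2⟩
      exact ⟨h1.symm, by rwa [Finset.pair_comm]⟩
    loopless := ⟨fun i h => h.1 rfl⟩ } with hGdef
  have hGadj : ∀ i j : Fin n, G.Adj i j ↔ i ≠ j ∧ ({i, j} : Finset (Fin n)) ∈ P := by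
    intro i j; exact Iff.rfl
  -- edge count of G equals number of supports
  have hedge : G.edgeFinset.card = P.card := by
    apply Finset.card_bij (fun e _ =>
      Sym2.lift ⟨fun i j => ({i, j} : Finset (Fin n)), fun i j => Finset.pair_comm i j⟩ e)
    · intro e he
      induction e using Sym2.ind with
      | _ i j =>
        rw [SimpleGraph.mem_edgeFinset, SimpleGraph.mem_edgeSet, hGadj] at he
        simpa using he.2
    · intro e he e' he' hee
      induction e using Sym2.ind with
      | _ i j =>
        induction e' using Sym2.ind with
        | _ a b =>
          rw [SimpleGraph.mem_edgeFinset, SimpleGraph.mem_edgeSet, hGadj] at he he'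
          simp only [Sym2.lift_mk] at hee
          rcases pair_eq_cases hee with ⟨rfl, rfl⟩ | ⟨rfl, rfl⟩
          · rfl
          · exact Sym2.eq_swap
    · intro s hs
      have hs' := hs
      rw [hPdef, Finset.mem_image] at hs'
      obtain ⟨x, hx, rfl⟩ := hs'
      obtain ⟨i, j, hij, hijs⟩ := Finset.card_eq_two.mp (hsupp2 x (hHLH hx))
      refine ⟨s(i, j), ?_, by simp [hijs]⟩
      rw [SimpleGraph.mem_edgeFinset, SimpleGraph.mem_edgeSet, hGadj]
      exact ⟨hij, hijs ▸ hs⟩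
  -- G is F-free
  have hGfree : ¬ ∃ φ : F →g G, Function.Injective φ := by
    rintro ⟨φ, hφ⟩
    apply hfree
    have hex : ∀ e ∈ F.edgeFinset, ∃ x, x ∈ HL ∧ qsupport x =
        Sym2.lift ⟨fun i j => ({i, j} : Finset (Fin n)), fun i j => Finset.pair_comm i j⟩
          (e.map φ) := by
      intro e he
      induction e using Sym2.ind with
      | _ u v =>
        rw [SimpleGraph.mem_edgeFinset, SimpleGraph.mem_edgeSet] at he
        have := φ.map_adj he
        rw [hGadj] at this
        obtain ⟨x, hx, hxs⟩ := Finset.mem_image.mp (hPdef ▸ this.2)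
        exact ⟨x, hx, by simp [Sym2.map_pair_eq, hxs]⟩
    choose g hg1 hg2 using hex
    set H' := F.edgeFinset.attach.image (fun e => g e.1 e.2) with hH'def
    have hH'sub : H' ⊆ HL := by
      intro x hx
      obtain ⟨e, _, rfl⟩ := Finset.mem_image.mp hx
      exact hg1 e.1 e.2
    refine ⟨H', hH'sub.trans hHLH, φ, hφ, ?_, ?_, ?_⟩
    · -- adjacency iff
      intro u v
      constructor
      · intro huv
        have he : s(u, v) ∈ F.edgeFinset := by
          rw [SimpleGraph.mem_edgeFinset, SimpleGraph.mem_edgeSet]; exact huv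
        refine ⟨g s(u, v) he, Finset.mem_image.mpr ⟨⟨s(u, v), he⟩, Finset.mem_attach _ _, rfl⟩, ?_⟩
        rw [hg2 s(u, v) he]
        simp [Sym2.map_pair_eq]
      · rintro ⟨x, hx, hxs⟩
        obtain ⟨⟨e, he⟩, _, rfl⟩ := Finset.mem_image.mp hx
        induction e using Sym2.ind with
        | _ a b =>
          have hab : F.Adj a b := by
            rw [SimpleGraph.mem_edgeFinset, SimpleGraph.mem_edgeSet] at he; exact he
          have := hg2 s(a, b) he
          rw [hxs] at this
          simp only [Sym2.map_pair_eq, Sym2.lift_mk] at this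
          rcases pair_eq_cases this with ⟨h1, h2⟩ | ⟨h1, h2⟩
          · rw [hφ h1, hφ h2]; exact hab
          · rw [hφ h1, hφ h2]; exact hab.symm
    · -- cardinality
      have hginj : ∀ e₁ ∈ F.edgeFinset.attach, ∀ e₂ ∈ F.edgeFinset.attach,
          g e₁.1 e₁.2 = g e₂.1 e₂.2 → e₁ = e₂ := by
        rintro ⟨e₁, he₁⟩ _ ⟨e₂, he₂⟩ _ heq
        have h1 := hg2 e₁ he₁
        have h2 := hg2 e₂ he₂
        rw [heq, h2] at h1
        induction e₁ using Sym2.ind with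
        | _ u v =>
          induction e₂ using Sym2.ind with
          | _ a b =>
            simp only [Sym2.map_pair_eq, Sym2.lift_mk] at h1
            have huv : u ≠ v := by
              rw [SimpleGraph.mem_edgeFinset, SimpleGraph.mem_edgeSet] at he₁
              exact he₁.ne
            rcases pair_eq_cases h1.symm with ⟨h3, h4⟩ | ⟨h3, h4⟩
            · simp [hφ h3, hφ h4]
            · simp [hφ h3, hφ h4, Sym2.eq_swap]
      rw [hH'def, Finset.card_image_of_injOn hginj, Finset.card_attach,
        Nat.card_eq_fintype_card, ← SimpleGraph.edgeFinset_card]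
    · -- q+1 condition
      intro x hx y hy _ i hxi hyi
      have hx' := Finset.mem_filter.mp (hH'sub hx)
      have hy' := Finset.mem_filter.mp (hH'sub hy)
      have := hx'.2 i hxi
      have := hy'.2 i hyi
      omega
  -- P.card ≤ exNum
  have hPle : P.card ≤ exNum n F := by
    have hbdd : BddAbove {m | ∃ G' : SimpleGraph (Fin n),
        (¬ ∃ φ : F →g G', Function.Injective φ) ∧ m = Nat.card G'.edgeSet} := by
      refine ⟨n.choose 2, ?_⟩
      rintro m ⟨G', _, rfl⟩
      have : Nat.card G'.edgeSet = G'.edgeFinset.card := by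
        rw [Nat.card_eq_fintype_card, SimpleGraph.edgeFinset_card]
      rw [this]
      calc G'.edgeFinset.card ≤ (Fintype.card (Fin n)).choose 2 :=
          SimpleGraph.card_edgeFinset_le_card_choose_two
        _ = n.choose 2 := by rw [Fintype.card_fin]
    apply le_csSup hbdd
    refine ⟨G, hGfree, ?_⟩
    rw [Nat.card_eq_fintype_card, ← SimpleGraph.edgeFinset_card, hedge]
  calc H.card = HB.card + HL.card := hsplit
    _ ≤ (q ^ 2 - t ^ 2) * n.choose 2 + t ^ 2 * exNum n F := by
        apply Nat.add_le_add hBcard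
        exact hLcard.trans (Nat.mul_le_mul_left _ hPle)
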